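/- (Dual Tsirelson bound for qubits.) Let M₁ be an effect on ℂ² ⊗ ℂ² with tr M₁ ≤ 1, and set M = 2M₁ − 𝟙. Then for all qubit states ρ₀^A, ρ₁^A, ρ₀^B, ρ₁^B, the quantity D = E(ρ₀^A, ρ₀^B, M) + E(ρ₀^A, ρ₁^B, M) + E(ρ₁^A, ρ₀^B, M) − E(ρ₁^A, ρ₁^B, M) satisfies |D| ≤ 2√2. -/

import Mathlib

open Matrix Kronecker ComplexOrder

/-- A quantum state: positive semidefinite matrix of trace one. -/
def IsState {d : ℕ} (ρ : Matrix (Fin d) (Fin d) ℂ) : Prop :=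
  ρ.PosSemidef ∧ ρ.trace = 1

/-- The difference from ignorance for a two-qubit system (`α₂ α₂ / 2 = 2`). -/
noncomputable def Ediff2
    (ρA ρB : Matrix (Fin 2) (Fin 2) ℂ)
    (M : Matrix (Fin 2 × Fin 2) (Fin 2 × Fin 2) ℂ) : ℝ :=
  2 * ((((ρA - (2 : ℂ)⁻¹ • 1) ⊗ₖ (ρB - (2 : ℂ)⁻¹ • 1)) * M).trace).re

set_option maxHeartbeats 1000000

open Matrix Kronecker ComplexOrder

open scoped MatrixOrder in
lemma posSemidef_iff_eq_transpose_mul_self {n : Type*} [Fintype n] [DecidableEq n]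
    {A : Matrix n n ℂ} : A.PosSemidef ↔ ∃ B : Matrix n n ℂ, A = Bᴴ * B := by
  constructor
  · intro hA
    refine ⟨CFC.sqrt A, ?_⟩
    have h1 := (CFC.sqrt_nonneg A).isSelfAdjoint
    rw [← star_eq_conjTranspose, h1.star_eq, CFC.sqrt_mul_sqrt_self A hA.nonneg]
  · rintro ⟨B, rfl⟩
    exact posSemidef_conjTranspose_mul_self _

lemma kron_conjT {m n : Type*} [Fintype m] [Fintype n] (A : Matrix m m ℂ) (B : Matrix n n ℂ) :
    (A ⊗ₖ B)ᴴ = Aᴴ ⊗ₖ Bᴴ := by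
  ext ⟨i,j⟩ ⟨k,l⟩
  simp [conjTranspose_apply, kroneckerMap_apply, mul_comm]

lemma psd_kron {m n : Type*} [Fintype m] [Fintype n] [DecidableEq m] [DecidableEq n]
    {A : Matrix m m ℂ} {B : Matrix n n ℂ} (hA : A.PosSemidef) (hB : B.PosSemidef) :
    (A ⊗ₖ B).PosSemidef := by
  obtain ⟨C, hC⟩ := posSemidef_iff_eq_transpose_mul_self.mp hA
  obtain ⟨D, hD⟩ := posSemidef_iff_eq_transpose_mul_self.mp hB
  rw [hC, hD, Matrix.mul_kronecker_mul, ← kron_conjT]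
  exact posSemidef_conjTranspose_mul_self _

lemma psd_trace_nonneg {n : Type*} [Fintype n] [DecidableEq n] {A : Matrix n n ℂ} (hA : A.PosSemidef) :
    0 ≤ A.trace := by
  rw [trace]
  apply Finset.sum_nonneg
  intro i _
  have := hA.dotProduct_mulVec_nonneg (Pi.single i 1)
  simpa [dotProduct, Matrix.mulVec, Pi.single_apply] using this

lemma psd_trace_mul_nonneg {n : Type*} [Fintype n] [DecidableEq n] {A B : Matrix n n ℂ}
    (hA : A.PosSemidef) (hB : B.PosSemidef) : 0 ≤ (A * B).trace := by
  obtain ⟨C, hC⟩ := posSemidef_iff_eq_transpose_mul_self.mp hA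
  rw [hC, mul_assoc, trace_mul_comm]
  exact psd_trace_nonneg (hB.mul_mul_conjTranspose_same C)

lemma psd_smul_real {n : Type*} [Fintype n] {A : Matrix n n ℂ} (hA : A.PosSemidef)
    {r : ℝ} (hr : 0 ≤ r) : ((r : ℂ) • A).PosSemidef := by
  refine posSemidef_iff_dotProduct_mulVec.mpr ?_
  constructor
  · unfold Matrix.IsHermitian
    rw [conjTranspose_smul, hA.1]
    norm_num
  · intro x
    rw [smul_mulVec, dotProduct_smul]
    exact mul_nonneg (by exact_mod_cast hr) (hA.dotProduct_mulVec_nonneg x)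

noncomputable def qf (b : Matrix (Fin 2) (Fin 2) ℂ) : ℝ :=
  (b 0 0).re ^ 2 + Complex.normSq (b 0 1)

lemma qf_nonneg (b : Matrix (Fin 2) (Fin 2) ℂ) : 0 ≤ qf b := by
  unfold qf
  have := Complex.normSq_nonneg (b 0 1)
  nlinarith [sq_nonneg (b 0 0).re]

lemma qf_neg (b : Matrix (Fin 2) (Fin 2) ℂ) : qf (-b) = qf b := by
  simp [qf, Matrix.neg_apply, Complex.normSq_neg, Complex.neg_re, neg_sq]

lemma qf_par (b₀ b₁ : Matrix (Fin 2) (Fin 2) ℂ) :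
    qf (b₀ + b₁) + qf (b₀ - b₁) = 2 * qf b₀ + 2 * qf b₁ := by
  simp only [qf, Matrix.add_apply, Matrix.sub_apply, Complex.normSq_apply,
    Complex.add_re, Complex.add_im, Complex.sub_re, Complex.sub_im]
  ring

lemma kron_sub_left {m n : Type*} (A B : Matrix m m ℂ) (C : Matrix n n ℂ) :
    (A - B) ⊗ₖ C = A ⊗ₖ C - B ⊗ₖ C := by
  ext ⟨i,j⟩ ⟨k,l⟩
  simp [kroneckerMap_apply, Matrix.sub_apply]
  ring

lemma kron_sub_right {m n : Type*} (A : Matrix m m ℂ) (B C : Matrix n n ℂ) :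
    A ⊗ₖ (B - C) = A ⊗ₖ B - A ⊗ₖ C := by
  ext ⟨i,j⟩ ⟨k,l⟩
  simp [kroneckerMap_apply, Matrix.sub_apply]
  ring

lemma state_herm {ρ : Matrix (Fin 2) (Fin 2) ℂ} (h : IsState ρ) :
    (ρ - (2 : ℂ)⁻¹ • 1).IsHermitian := by
  apply Matrix.IsHermitian.sub h.1.isHermitian
  unfold Matrix.IsHermitian
  rw [conjTranspose_smul, conjTranspose_one]
  norm_num

lemma state_diag {ρ : Matrix (Fin 2) (Fin 2) ℂ} (h : IsState ρ) :
    (ρ - (2 : ℂ)⁻¹ • 1) 1 1 = - (ρ - (2 : ℂ)⁻¹ • 1) 0 0 := by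
  have ht := h.2
  rw [Matrix.trace_fin_two] at ht
  simp [Matrix.sub_apply, Matrix.smul_apply, Matrix.one_apply]
  linear_combination ht

lemma psd_det_nonneg2 {A : Matrix (Fin 2) (Fin 2) ℂ} (hA : A.PosSemidef) : 0 ≤ A.det := by
  obtain ⟨B, hB⟩ := posSemidef_iff_eq_transpose_mul_self.mp hA
  rw [hB, Matrix.det_mul, Matrix.det_conjTranspose]
  exact star_mul_self_nonneg _

lemma state_qf {ρ : Matrix (Fin 2) (Fin 2) ℂ} (h : IsState ρ) :
    qf (ρ - (2 : ℂ)⁻¹ • 1) ≤ 1 / 4 := by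
  have hherm := h.1.isHermitian
  have h00 : ρ 0 0 = ((ρ 0 0).re : ℂ) := by
    have := congrFun (congrFun hherm 0) 0
    simp [conjTranspose_apply] at this
    exact ((Complex.conj_eq_iff_re).mp this).symm
  have h10 : ρ 1 0 = (starRingEnd ℂ) (ρ 0 1) := by
    have := congrFun (congrFun hherm 1) 0
    simpa [conjTranspose_apply] using this.symm
  have ht := h.2
  rw [Matrix.trace_fin_two] at ht
  have h11 : ρ 1 1 = 1 - ((ρ 0 0).re : ℂ) := by rw [← h00]; linear_combination ht
  have hdet : ρ.det = (((ρ 0 0).re * (1 - (ρ 0 0).re) - Complex.normSq (ρ 0 1) : ℝ) : ℂ) := by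
    rw [Matrix.det_fin_two, h10, h11, Complex.mul_conj]
    rw [h00]
    push_cast [Complex.ofReal_re]
    ring
  have hd := psd_det_nonneg2 h.1
  rw [hdet, Complex.zero_le_real] at hd
  have hq : qf (ρ - (2 : ℂ)⁻¹ • 1) = ((ρ 0 0).re - 2⁻¹)^2 + Complex.normSq (ρ 0 1) := by
    unfold qf
    norm_num [Matrix.sub_apply, Matrix.smul_apply, Matrix.one_apply]
  rw [hq]
  nlinarith [Complex.normSq_nonneg (ρ 0 1)]

lemma psd_of_sq_eq {P : Matrix (Fin 2) (Fin 2) ℂ} (hP : P.IsHermitian) {β : ℝ} (hβ : 0 ≤ β)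
    (hsq : P * P = ((2 * β : ℝ) : ℂ) • P) : P.PosSemidef := by
  rcases hβ.eq_or_lt with h | h
  · have h0 : Pᴴ * P = 0 := by rw [hP, hsq, ← h]; simp
    rw [Matrix.conjTranspose_mul_self_eq_zero.mp h0]
    exact Matrix.PosSemidef.zero
  · set c : ℂ := (((Real.sqrt (2 * β))⁻¹ : ℝ) : ℂ) with hcdef
    have hc : c * c * (2 * β : ℝ) = 1 := by
      have h2 : (0:ℝ) < 2 * β := by linarith
      have hs : Real.sqrt (2*β) ≠ 0 := ne_of_gt (Real.sqrt_pos.mpr h2)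
      have hms : Real.sqrt (2*β) * Real.sqrt (2*β) = 2*β := Real.mul_self_sqrt h2.le
      have hr : ((Real.sqrt (2*β))⁻¹ * (Real.sqrt (2*β))⁻¹ * (2*β) : ℝ) = 1 := by
        rw [← hms, Real.sqrt_mul_self (Real.sqrt_nonneg _)]
        field_simp
      calc c * c * ((2*β : ℝ):ℂ)
          = (((Real.sqrt (2*β))⁻¹ * (Real.sqrt (2*β))⁻¹ * (2*β) : ℝ) : ℂ) := by
            rw [hcdef]; push_cast; ring
        _ = 1 := by rw [hr]; norm_num
    have key : P = (c • P)ᴴ * (c • P) := by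
      rw [conjTranspose_smul, hP]
      have hcr : star c = c := by simp [c]
      rw [hcr, smul_mul_smul_comm, hsq, smul_smul, hc, one_smul]
    rw [key]
    exact posSemidef_conjTranspose_mul_self _

/-- key 2x2 lemma: for traceless Hermitian b, sqrt(qf b) • 1 + b is PSD -/
lemma psd_shift {b : Matrix (Fin 2) (Fin 2) ℂ} (hb : b.IsHermitian) (h2 : b 1 1 = - b 0 0) :
    (((Real.sqrt (qf b) : ℝ) : ℂ) • 1 + b).PosSemidef := by
  set β := Real.sqrt (qf b) with hβdef
  have hβ : 0 ≤ β := Real.sqrt_nonneg _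
  have hq : (β : ℝ) ^ 2 = qf b := Real.sq_sqrt (qf_nonneg b)
  have hx : b 0 0 = ((b 0 0).re : ℂ) := by
    have := congrFun (congrFun hb 0) 0
    simp [conjTranspose_apply] at this
    exact ((Complex.conj_eq_iff_re).mp this).symm
  have h10 : b 1 0 = (starRingEnd ℂ) (b 0 1) := by
    have := congrFun (congrFun hb 1) 0
    simpa [conjTranspose_apply] using this.symm
  have hbb : b * b = ((qf b : ℝ) : ℂ) • 1 := by
    ext i j
    fin_cases i <;> fin_cases j <;>
      simp [Matrix.mul_apply, Fin.sum_univ_two, h2, h10, Matrix.one_apply, qf] <;>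
      rw [hx] <;> push_cast <;> ring_nf <;>
      simp [Complex.ext_iff, Complex.normSq_apply] <;> ring_nf <;> try constructor <;> first | trivial | ring
  apply psd_of_sq_eq (by
    apply Matrix.IsHermitian.add _ hb
    unfold Matrix.IsHermitian
    rw [conjTranspose_smul]
    simp) hβ
  rw [add_mul, mul_add, mul_add, hbb, ← hq]
  push_cast
  simp only [smul_mul_assoc, mul_smul_comm, one_mul, mul_one, smul_smul]
  module

lemma Ediff_eq (ρA ρB : Matrix (Fin 2) (Fin 2) ℂ)
    (M₁ : Matrix (Fin 2 × Fin 2) (Fin 2 × Fin 2) ℂ) (hA : ρA.trace = 1) :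
    Ediff2 ρA ρB ((2:ℂ) • M₁ - 1) =
      4 * ((((ρA - (2:ℂ)⁻¹ • 1) ⊗ₖ (ρB - (2:ℂ)⁻¹ • 1)) * M₁).trace).re := by
  unfold Ediff2
  have htra : (ρA - (2:ℂ)⁻¹ • 1).trace = 0 := by
    rw [Matrix.trace_sub, Matrix.trace_smul, hA, Matrix.trace_one]
    norm_num
  rw [mul_sub, mul_one, Matrix.mul_smul]
  rw [Matrix.trace_sub, Matrix.trace_smul, Matrix.trace_kronecker, htra, zero_mul, sub_zero]
  simp [smul_eq_mul, Complex.mul_re]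
  ring

lemma psd_shift_neg {b : Matrix (Fin 2) (Fin 2) ℂ} (hb : b.IsHermitian) (h2 : b 1 1 = - b 0 0) :
    (((Real.sqrt (qf b) : ℝ) : ℂ) • 1 - b).PosSemidef := by
  have h := psd_shift (b := -b) hb.neg (by simp [Matrix.neg_apply, h2])
  rw [qf_neg] at h
  simpa [sub_eq_add_neg] using h

/-- dual Tsirelson bound for qubits: any two-qubit effect `M₁` with
`tr M₁ ≤ 1` satisfies `|D| ≤ 2√2` for all qubit states. -/
theorem dual_tsirelson_bound
    (M₁ : Matrix (Fin 2 × Fin 2) (Fin 2 × Fin 2) ℂ)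
    (hM₁ : M₁.PosSemidef)
    (hM₁' : ((1 : Matrix (Fin 2 × Fin 2) (Fin 2 × Fin 2) ℂ) - M₁).PosSemidef)
    (htr : M₁.trace ≤ 1)
    (ρA₀ ρA₁ ρB₀ ρB₁ : Matrix (Fin 2) (Fin 2) ℂ)
    (hA₀ : IsState ρA₀) (hA₁ : IsState ρA₁) (hB₀ : IsState ρB₀) (hB₁ : IsState ρB₁) :
    |Ediff2 ρA₀ ρB₀ ((2 : ℂ) • M₁ - 1) + Ediff2 ρA₀ ρB₁ ((2 : ℂ) • M₁ - 1)
      + Ediff2 ρA₁ ρB₀ ((2 : ℂ) • M₁ - 1) - Ediff2 ρA₁ ρB₁ ((2 : ℂ) • M₁ - 1)|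
      ≤ 2 * Real.sqrt 2 := by
  rw [Ediff_eq _ _ _ hA₀.2, Ediff_eq _ _ _ hA₀.2, Ediff_eq _ _ _ hA₁.2, Ediff_eq _ _ _ hA₁.2]
  set a₀ := ρA₀ - (2:ℂ)⁻¹ • 1 with ha₀def
  set a₁ := ρA₁ - (2:ℂ)⁻¹ • 1 with ha₁def
  set b₀ := ρB₀ - (2:ℂ)⁻¹ • 1 with hb₀def
  set b₁ := ρB₁ - (2:ℂ)⁻¹ • 1 with hb₁def
  clear_value a₀ a₁ b₀ b₁
  set c := b₀ + b₁ with hcdef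
  set d := b₀ - b₁ with hddef
  clear_value c d
  set α₀ := Real.sqrt (qf a₀) with hα₀def
  set α₁ := Real.sqrt (qf a₁) with hα₁def
  set γ := Real.sqrt (qf c) with hγdef
  set δ := Real.sqrt (qf d) with hδdef
  set s := α₀ * γ + α₁ * δ with hsdef
  set X := a₀ ⊗ₖ c + a₁ ⊗ₖ d with hXdef
  clear_value α₀ α₁ γ δ s X
  -- basic entrywise facts
  have ea0 : a₀ 1 1 = - a₀ 0 0 := by rw [ha₀def]; exact state_diag hA₀
  have ea1 : a₁ 1 1 = - a₁ 0 0 := by rw [ha₁def]; exact state_diag hA₁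
  have eb0 : b₀ 1 1 = - b₀ 0 0 := by rw [hb₀def]; exact state_diag hB₀
  have eb1 : b₁ 1 1 = - b₁ 0 0 := by rw [hb₁def]; exact state_diag hB₁
  have ha₀h : a₀.IsHermitian := by rw [ha₀def]; exact state_herm hA₀
  have ha₁h : a₁.IsHermitian := by rw [ha₁def]; exact state_herm hA₁
  have hb₀h : b₀.IsHermitian := by rw [hb₀def]; exact state_herm hB₀
  have hb₁h : b₁.IsHermitian := by rw [hb₁def]; exact state_herm hB₁
  have hca : c.IsHermitian := by rw [hcdef]; exact hb₀h.add hb₁h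
  have hda : d.IsHermitian := by rw [hddef]; exact hb₀h.sub hb₁h
  have hcd : c 1 1 = - c 0 0 := by
    rw [hcdef]; simp only [Matrix.add_apply]; rw [eb0, eb1]; ring
  have hdd : d 1 1 = - d 0 0 := by
    rw [hddef]; simp only [Matrix.sub_apply]; rw [eb0, eb1]; ring
  -- PSD building blocks
  have p1 : (((α₀ : ℝ) : ℂ) • 1 + a₀).PosSemidef := by
    rw [hα₀def]; exact psd_shift ha₀h ea0
  have m1 : (((α₀ : ℝ) : ℂ) • 1 - a₀).PosSemidef := by
    rw [hα₀def]; exact psd_shift_neg ha₀h ea0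
  have p2 : (((α₁ : ℝ) : ℂ) • 1 + a₁).PosSemidef := by
    rw [hα₁def]; exact psd_shift ha₁h ea1
  have m2 : (((α₁ : ℝ) : ℂ) • 1 - a₁).PosSemidef := by
    rw [hα₁def]; exact psd_shift_neg ha₁h ea1
  have pc : (((γ : ℝ) : ℂ) • 1 + c).PosSemidef := by
    rw [hγdef]; exact psd_shift hca hcd
  have mc : (((γ : ℝ) : ℂ) • 1 - c).PosSemidef := by
    rw [hγdef]; exact psd_shift_neg hca hcd
  have pd : (((δ : ℝ) : ℂ) • 1 + d).PosSemidef := by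
    rw [hδdef]; exact psd_shift hda hdd
  have md : (((δ : ℝ) : ℂ) • 1 - d).PosSemidef := by
    rw [hδdef]; exact psd_shift_neg hda hdd
  have hP2 : ((((α₀:ℂ)•1 + a₀) ⊗ₖ ((γ:ℂ)•1 + c)) + (((α₀:ℂ)•1 - a₀) ⊗ₖ ((γ:ℂ)•1 - c)))
      + ((((α₁:ℂ)•1 + a₁) ⊗ₖ ((δ:ℂ)•1 + d)) + (((α₁:ℂ)•1 - a₁) ⊗ₖ ((δ:ℂ)•1 - d)))
      = (2:ℂ) • ((s:ℂ) • 1 + X) := by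
    rw [hXdef, hsdef]
    push_cast
    simp only [Matrix.add_kronecker, Matrix.kronecker_add, kron_sub_left, kron_sub_right,
      Matrix.smul_kronecker, Matrix.kronecker_smul, Matrix.one_kronecker_one, smul_smul]
    module
  have hN2 : ((((α₀:ℂ)•1 + a₀) ⊗ₖ ((γ:ℂ)•1 - c)) + (((α₀:ℂ)•1 - a₀) ⊗ₖ ((γ:ℂ)•1 + c)))
      + ((((α₁:ℂ)•1 + a₁) ⊗ₖ ((δ:ℂ)•1 - d)) + (((α₁:ℂ)•1 - a₁) ⊗ₖ ((δ:ℂ)•1 + d)))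
      = (2:ℂ) • ((s:ℂ) • 1 - X) := by
    rw [hXdef, hsdef]
    push_cast
    simp only [Matrix.add_kronecker, Matrix.kronecker_add, kron_sub_left, kron_sub_right,
      Matrix.smul_kronecker, Matrix.kronecker_smul, Matrix.one_kronecker_one, smul_smul]
    module
  have hXp : ((s:ℂ) • (1 : Matrix (Fin 2 × Fin 2) (Fin 2 × Fin 2) ℂ) + X).PosSemidef := by
    have heq : (((1/2 : ℝ) : ℂ)) • (((((α₀:ℂ)•1 + a₀) ⊗ₖ ((γ:ℂ)•1 + c)) + (((α₀:ℂ)•1 - a₀) ⊗ₖ ((γ:ℂ)•1 - c)))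
        + ((((α₁:ℂ)•1 + a₁) ⊗ₖ ((δ:ℂ)•1 + d)) + (((α₁:ℂ)•1 - a₁) ⊗ₖ ((δ:ℂ)•1 - d))))
        = (s:ℂ) • 1 + X := by
      rw [hP2, smul_smul]
      norm_num
    rw [← heq]
    exact psd_smul_real (((psd_kron p1 pc).add (psd_kron m1 mc)).add
      ((psd_kron p2 pd).add (psd_kron m2 md))) (by norm_num)
  have hXm : ((s:ℂ) • (1 : Matrix (Fin 2 × Fin 2) (Fin 2 × Fin 2) ℂ) - X).PosSemidef := by
    have heq : (((1/2 : ℝ) : ℂ)) • (((((α₀:ℂ)•1 + a₀) ⊗ₖ ((γ:ℂ)•1 - c)) + (((α₀:ℂ)•1 - a₀) ⊗ₖ ((γ:ℂ)•1 + c)))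
        + ((((α₁:ℂ)•1 + a₁) ⊗ₖ ((δ:ℂ)•1 - d)) + (((α₁:ℂ)•1 - a₁) ⊗ₖ ((δ:ℂ)•1 + d))))
        = (s:ℂ) • 1 - X := by
      rw [hN2, smul_smul]
      norm_num
    rw [← heq]
    exact psd_smul_real (((psd_kron p1 mc).add (psd_kron m1 pc)).add
      ((psd_kron p2 md).add (psd_kron m2 pd))) (by norm_num)
  set τ := (M₁.trace).re with hτdef
  set t := ((X * M₁).trace).re with htdef
  have htr1 : 0 ≤ s * τ + t := by
    have h := psd_trace_mul_nonneg hXp hM₁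
    rw [Matrix.add_mul, Matrix.smul_mul, Matrix.one_mul, Matrix.trace_add, Matrix.trace_smul] at h
    have h' := (Complex.le_def.mp h).1
    simpa [smul_eq_mul, Complex.add_re, Complex.mul_re, Complex.ofReal_re, Complex.ofReal_im,
      hτdef, htdef] using h'
  have htr2 : 0 ≤ s * τ - t := by
    have h := psd_trace_mul_nonneg hXm hM₁
    rw [Matrix.sub_mul, Matrix.smul_mul, Matrix.one_mul, Matrix.trace_sub, Matrix.trace_smul] at h
    have h' := (Complex.le_def.mp h).1
    simpa [smul_eq_mul, Complex.sub_re, Complex.mul_re, Complex.ofReal_re, Complex.ofReal_im,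
      hτdef, htdef] using h'
  have hτ0 : 0 ≤ τ := by
    have h := psd_trace_nonneg hM₁
    simpa [hτdef] using (Complex.le_def.mp h).1
  have hτ1 : τ ≤ 1 := by
    have h := (Complex.le_def.mp htr).1
    simpa [hτdef] using h
  have hts : t = (((a₀ ⊗ₖ b₀) * M₁).trace).re + (((a₀ ⊗ₖ b₁) * M₁).trace).re
      + ((((a₁ ⊗ₖ b₀) * M₁).trace).re - (((a₁ ⊗ₖ b₁) * M₁).trace).re) := by
    have hXsum : X = a₀ ⊗ₖ b₀ + a₀ ⊗ₖ b₁ + (a₁ ⊗ₖ b₀ - a₁ ⊗ₖ b₁) := by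
      rw [hXdef, hcdef, hddef, Matrix.kronecker_add, kron_sub_right]
    rw [htdef, hXsum]
    simp [Matrix.add_mul, Matrix.sub_mul, Matrix.trace_add, Matrix.trace_sub,
      Complex.add_re, Complex.sub_re]
  -- numeric bounds
  have hq₀ : qf a₀ ≤ 1/4 := by rw [ha₀def]; exact state_qf hA₀
  have hq₁ : qf a₁ ≤ 1/4 := by rw [ha₁def]; exact state_qf hA₁
  have hα₀0 : 0 ≤ α₀ := by rw [hα₀def]; exact Real.sqrt_nonneg _
  have hα₁0 : 0 ≤ α₁ := by rw [hα₁def]; exact Real.sqrt_nonneg _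
  have hγ0 : 0 ≤ γ := by rw [hγdef]; exact Real.sqrt_nonneg _
  have hδ0 : 0 ≤ δ := by rw [hδdef]; exact Real.sqrt_nonneg _
  have hα₀b : α₀ ≤ 1/2 := by
    have := Real.sq_sqrt (qf_nonneg a₀)
    rw [← hα₀def] at this
    nlinarith
  have hα₁b : α₁ ≤ 1/2 := by
    have := Real.sq_sqrt (qf_nonneg a₁)
    rw [← hα₁def] at this
    nlinarith
  have hγ2 : γ^2 = qf c := by rw [hγdef]; exact Real.sq_sqrt (qf_nonneg c)
  have hδ2 : δ^2 = qf d := by rw [hδdef]; exact Real.sq_sqrt (qf_nonneg d)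
  have hpar : qf c + qf d ≤ 1 := by
    have h := qf_par b₀ b₁
    rw [← hcdef, ← hddef] at h
    have h2 : qf b₀ ≤ 1/4 := by rw [hb₀def]; exact state_qf hB₀
    have h3 : qf b₁ ≤ 1/4 := by rw [hb₁def]; exact state_qf hB₁
    linarith
  have hsum2 : γ + δ ≤ Real.sqrt 2 := by
    nlinarith [Real.sq_sqrt (show (0:ℝ) ≤ 2 by norm_num), Real.sqrt_nonneg 2,
      sq_nonneg (γ - δ), hγ2, hδ2, hpar, hγ0, hδ0]
  have hs0 : 0 ≤ s := by
    rw [hsdef]; exact add_nonneg (mul_nonneg hα₀0 hγ0) (mul_nonneg hα₁0 hδ0)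
  have h1 : s * τ ≤ s := by nlinarith
  have h2 : s ≤ (γ + δ) / 2 := by rw [hsdef]; nlinarith
  have h4sτ : 4 * (s * τ) ≤ 2 * Real.sqrt 2 := by linarith
  rw [abs_le]
  constructor <;> linarith [hts, htr1, htr2, h4sτ]
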